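/- The network-optimal security cost U(G) equals the weight of the minimum s-ℓ cut in the auxiliary network G*, and if (X, X̄) is a minimum cut with s ∈ X, then the network-optimal secured set is S* = N \ X. -/

import Mathlib

open Finset

/-- In-neighbors of `i`: players `j` with an arc `(j, i)`. -/
def inN {V : Type*} [Fintype V] (A : V → V → Prop) [DecidableRel A] (i : V) : Finset V :=
  Finset.univ.filter fun j => A j i

/-- Total network security cost when exactly the players in `S` are secured. -/
noncomputable def netCost {V : Type*} [Fintype V] [DecidableEq V]
    (A : V → V → Prop) [DecidableRel A] (θ L : V → ℝ) (ξ : V → V → ℝ)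
    (S : Finset V) : ℝ :=
  ∑ i ∈ S, (θ i + ∑ j ∈ inN A i \ S, ξ j i) + ∑ i ∈ Finset.univ \ S, L i

/-- Nodes of the auxiliary network `G*`: the players, plus a source
`Sum.inr false = s` and a sink `Sum.inr true = ℓ`. -/
abbrev AuxNode (V : Type*) := V ⊕ Bool

/-- Arc weights of the auxiliary network `G*`: `s → i` with weight `θ i`,
`i → j` with weight `ξ i j` for each arc `(i,j) ∈ A`, and `i → ℓ` with
weight `L i`; all other pairs have weight `0`. -/
noncomputable def auxW {V : Type*} (A : V → V → Prop) [DecidableRel A]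
    (θ L : V → ℝ) (ξ : V → V → ℝ) : AuxNode V → AuxNode V → ℝ
  | Sum.inr false, Sum.inl i => θ i
  | Sum.inl i, Sum.inl j => if A i j then ξ i j else 0
  | Sum.inl i, Sum.inr true => L i
  | _, _ => 0

/-- Weight of the cut `(X, X̄)` in `G*`: total weight of arcs from `X` to its
complement. -/
noncomputable def cutWeight {V : Type*} [Fintype V] [DecidableEq V]
    (A : V → V → Prop) [DecidableRel A] (θ L : V → ℝ) (ξ : V → V → ℝ)
    (X : Finset (AuxNode V)) : ℝ :=
  ∑ a ∈ X, ∑ b ∈ Finset.univ \ X, auxW A θ L ξ a b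

lemma cut_eq_netCost {V : Type*} [Fintype V] [DecidableEq V]
    (A : V → V → Prop) [DecidableRel A] (θ L : V → ℝ) (ξ : V → V → ℝ)
    (X : Finset (AuxNode V))
    (hs : (Sum.inr false : AuxNode V) ∈ X) (hl : (Sum.inr true : AuxNode V) ∉ X) :
    cutWeight A θ L ξ X =
      netCost A θ L ξ (Finset.univ.filter fun i => (Sum.inl i : AuxNode V) ∉ X) := by
  classical
  set S : Finset V := Finset.univ.filter fun i => (Sum.inl i : AuxNode V) ∉ X with hS
  have hmemS : ∀ i : V, i ∈ S ↔ (Sum.inl i : AuxNode V) ∉ X := by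
    intro i; simp [hS]
  have hsd : (Finset.univ : Finset (AuxNode V)) \ X = Finset.univ.filter (fun b => b ∉ X) := by
    ext b; simp
  have hgs : ∑ b ∈ Finset.univ \ X, auxW A θ L ξ (Sum.inr false) b = ∑ i ∈ S, θ i := by
    rw [hsd, sum_filter, Fintype.sum_sum_type]
    have h1 : ∀ b : Bool, (if (Sum.inr b : AuxNode V) ∉ X then auxW A θ L ξ (Sum.inr false) (Sum.inr b) else 0) = 0 := by
      intro b; cases b <;> simp [auxW]
    simp only [h1, Finset.sum_const_zero, add_zero]
    rw [hS, sum_filter]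
    rfl
  have hgl : ∀ i : V, ∑ b ∈ Finset.univ \ X, auxW A θ L ξ (Sum.inl i) b
      = (∑ j ∈ S, if A i j then ξ i j else 0) + L i := by
    intro i
    rw [hsd, sum_filter, Fintype.sum_sum_type]
    have h1 : ∑ b : Bool, (if (Sum.inr b : AuxNode V) ∉ X then auxW A θ L ξ (Sum.inl i) (Sum.inr b) else 0) = L i := by
      simp [auxW, hs, hl]
    rw [h1, hS, sum_filter]
    rfl
  have hXsum : ∀ f : AuxNode V → ℝ, ∑ a ∈ X, f a = ∑ a : AuxNode V, if a ∈ X then f a else 0 := by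
    intro f; rw [Finset.sum_ite_mem, univ_inter]
  have houter : cutWeight A θ L ξ X
      = ∑ i ∈ Finset.univ \ S, ((∑ j ∈ S, if A i j then ξ i j else 0) + L i) + ∑ i ∈ S, θ i := by
    rw [cutWeight, hXsum, Fintype.sum_sum_type]
    have h1 : ∑ b : Bool, (if (Sum.inr b : AuxNode V) ∈ X then ∑ c ∈ Finset.univ \ X, auxW A θ L ξ (Sum.inr b) c else 0) = ∑ i ∈ S, θ i := by
      rw [Fintype.sum_bool]
      simp [hs, hl, hgs]
    rw [h1]
    congr 1
    have h2 : (Finset.univ : Finset V) \ S = Finset.univ.filter (fun i => (Sum.inl i : AuxNode V) ∈ X) := by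
      ext i; simp [hmemS]
    rw [h2, sum_filter]
    refine Finset.sum_congr rfl fun i _ => ?_
    by_cases h : (Sum.inl i : AuxNode V) ∈ X <;> simp [h, hgl]
  rw [houter, netCost]
  have hswap : ∑ i ∈ Finset.univ \ S, ∑ j ∈ S, (if A i j then ξ i j else 0)
      = ∑ i ∈ S, ∑ j ∈ inN A i \ S, ξ j i := by
    rw [Finset.sum_comm]
    refine Finset.sum_congr rfl fun i _ => ?_
    have : inN A i \ S = (Finset.univ \ S).filter (fun j => A j i) := by
      ext j; simp [inN, and_comm]
    rw [this, sum_filter]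
  rw [Finset.sum_add_distrib, hswap, Finset.sum_add_distrib]
  ring

/-- if `(X, X̄)` is a minimum-weight `s`-`ℓ` cut of the auxiliary
network `G*`, then `S* = N \ X` is a network-optimal secured set and the
network-optimal security cost `U(G)` equals the weight of the cut. -/
theorem min_cut_gives_network_optimal {V : Type*} [Fintype V] [DecidableEq V]
    (A : V → V → Prop) [DecidableRel A] (θ L : V → ℝ) (ξ : V → V → ℝ)
    (hθ : ∀ i, 0 ≤ θ i) (hL : ∀ i, 0 ≤ L i) (hξ : ∀ i j, 0 ≤ ξ i j)
    (X : Finset (AuxNode V))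
    (hs : (Sum.inr false : AuxNode V) ∈ X) (hl : (Sum.inr true : AuxNode V) ∉ X)
    (hmin : ∀ Y : Finset (AuxNode V),
      (Sum.inr false : AuxNode V) ∈ Y → (Sum.inr true : AuxNode V) ∉ Y →
      cutWeight A θ L ξ X ≤ cutWeight A θ L ξ Y) :
    (∀ T : Finset V,
        netCost A θ L ξ (Finset.univ.filter fun i => (Sum.inl i : AuxNode V) ∉ X) ≤
          netCost A θ L ξ T) ∧
    cutWeight A θ L ξ X =
      netCost A θ L ξ (Finset.univ.filter fun i => (Sum.inl i : AuxNode V) ∉ X) := by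
  classical
  have hkey := cut_eq_netCost A θ L ξ X hs hl
  refine ⟨fun T => ?_, hkey⟩
  set Y : Finset (AuxNode V) :=
    insert (Sum.inr false) ((Finset.univ \ T).image Sum.inl) with hY
  have hsY : (Sum.inr false : AuxNode V) ∈ Y := by simp [hY]
  have hlY : (Sum.inr true : AuxNode V) ∉ Y := by simp [hY]
  have hTY : (Finset.univ.filter fun i => (Sum.inl i : AuxNode V) ∉ Y) = T := by
    ext i; simp [hY]
  have h2 := cut_eq_netCost A θ L ξ Y hsY hlY
  rw [hTY] at h2
  rw [← hkey, ← h2]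
  exact hmin Y hsY hlY
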